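/- Acceptance probability of the teleported circuit: let ψ ∈ ℂ² with ∑|ψ|² = 1, and let U, V be unitary 2×2 complex matrices. Starting from ψ ⊗ EPR on qubits (1,2,3), apply U to qubit 1, then B† to qubits (1,2), then V to qubit 3; call the resulting state Φ. Then the probability of measuring outcome (0,0,0), namely |Φ(0,0,0)|², equals (1/4)·|(V·U·ψ)(0)|², i.e., exactly 1/4 times the probability that the original circuit V·U applied to ψ yields outcome 0. -/
import Mathlib


open Matrix Kronecker

noncomputable def Hgate : Matrix (Fin 2) (Fin 2) ℂ :=
  ((1 / Real.sqrt 2 : ℝ) : ℂ) • !![1, 1; 1, -1]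

/-- The CNOT gate: `CNOT(|a⟩⊗|b⟩) = |a⟩⊗|a⊕b⟩`. -/
def CNOT : Matrix (Fin 2 × Fin 2) (Fin 2 × Fin 2) ℂ :=
  fun p q => if p = (q.1, q.1 + q.2) then 1 else 0

/-- The Bell gate `B = CNOT * (H ⊗ I₂)`. -/
noncomputable def Bgate : Matrix (Fin 2 × Fin 2) (Fin 2 × Fin 2) ℂ :=
  CNOT * (Hgate ⊗ₖ (1 : Matrix (Fin 2) (Fin 2) ℂ))

/-- `B†`, the conjugate transpose of the Bell gate. -/
noncomputable def Bdag : Matrix (Fin 2 × Fin 2) (Fin 2 × Fin 2) ℂ := Bgateᴴ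

/-- The computational basis state `|a⟩` of one qubit. -/
def ket (a : Fin 2) : Fin 2 → ℂ := fun i => if i = a then 1 else 0

/-- The EPR state `B(|0⟩⊗|0⟩) = (|00⟩+|11⟩)/√2`. -/
noncomputable def EPR : Fin 2 × Fin 2 → ℂ :=
  Bgate.mulVec fun p => ket 0 p.1 * ket 0 p.2

/-- The initial state `ψ ⊗ EPR` on qubits `(1,2,3)`. -/
noncomputable def step0 (ψ : Fin 2 → ℂ) : Fin 2 × Fin 2 × Fin 2 → ℂ :=
  fun x => ψ x.1 * EPR (x.2.1, x.2.2)

/-- Apply `U` to qubit 1. -/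
noncomputable def step1 (U : Matrix (Fin 2) (Fin 2) ℂ) (ψ : Fin 2 → ℂ) :
    Fin 2 × Fin 2 × Fin 2 → ℂ :=
  fun x => ∑ q : Fin 2, U x.1 q * step0 ψ (q, x.2.1, x.2.2)

/-- Then apply `B†` to qubits `(1,2)`. -/
noncomputable def step2 (U : Matrix (Fin 2) (Fin 2) ℂ) (ψ : Fin 2 → ℂ) :
    Fin 2 × Fin 2 × Fin 2 → ℂ :=
  fun x => ∑ y : Fin 2 × Fin 2, Bdag (x.1, x.2.1) y * step1 U ψ (y.1, y.2, x.2.2)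

/-- Finally apply `V` to qubit 3; this is the resulting state `Φ`. -/
noncomputable def step3 (V U : Matrix (Fin 2) (Fin 2) ℂ) (ψ : Fin 2 → ℂ) :
    Fin 2 × Fin 2 × Fin 2 → ℂ :=
  fun x => ∑ c : Fin 2, V x.2.2 c * step2 U ψ (x.1, x.2.1, c)

/-- Acceptance probability of the teleported circuit: the probability of measuring
outcome `(0,0,0)` in the state `Φ` equals exactly `1/4` times the probability that
the original circuit `V·U` applied to `ψ` yields outcome `0`. -/
theorem teleported_acceptance_prob (ψ : Fin 2 → ℂ)
    (hψ : ∑ q : Fin 2, ‖ψ q‖ ^ 2 = 1)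
    (U V : Matrix (Fin 2) (Fin 2) ℂ)
    (hU : U ∈ Matrix.unitaryGroup (Fin 2) ℂ)
    (hV : V ∈ Matrix.unitaryGroup (Fin 2) ℂ) :
    ‖step3 V U ψ (0, 0, 0)‖ ^ 2 = (1 / 4 : ℝ) * ‖(V * U).mulVec ψ 0‖ ^ 2 := by
  have h2 : (Real.sqrt 2 : ℂ) * (Real.sqrt 2 : ℂ) = 2 := by
    rw [← Complex.ofReal_mul, Real.mul_self_sqrt (by norm_num : (0:ℝ) ≤ 2)]
    norm_num
  have key : step3 V U ψ (0, 0, 0) = (1 / 2 : ℂ) * (V * U).mulVec ψ 0 := by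
    simp only [step3, step2, step1, step0, EPR, Bdag, Bgate, CNOT, Hgate, ket,
      Matrix.mulVec, Matrix.mul_apply, dotProduct, Matrix.conjTranspose_apply,
      Matrix.kroneckerMap_apply, Fintype.sum_prod_type, Fin.sum_univ_two,
      Matrix.smul_apply, Matrix.one_apply]
    norm_num [Matrix.cons_val_zero, Matrix.cons_val_one, Matrix.head_cons, Fin.ext_iff]
    field_simp
    ring_nf
    rw [sq, h2]
  rw [key, norm_mul, mul_pow]
  norm_num
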